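/- arXiv:2003.00631 — 2 statements merged into one kernel-verified Lean document; each statement's English description precedes it below -/
import Mathlib

section
/- Let f : ℝ^d → ℝ be differentiable with L-Lipschitz gradient and f ≥ 0, and let λ, β > 0 with step size 0 < η < 2/(β+L). Define the RVSM iteration w^{t+1} = w^t - η∇f(w^t) - ηβ(w^t - u^t), u^{t+1} = H_{√(2λ/β)}(w^{t+1}), started from u^0 = H_{√(2λ/β)}(w^0). Then the sequence L_β(w^t,u^t) = f(w^t) + λ‖u^t‖₀ + (β/2)‖w^t - u^t‖² is monotonically non-increasing and converges to a limit. -/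
open scoped Classical

/-- Hard-thresholding operator: keeps entries with magnitude strictly above `α`. -/
noncomputable def Hthr {d : ℕ} (α : ℝ) (w : EuclideanSpace ℝ (Fin d)) :
    EuclideanSpace ℝ (Fin d) :=
  WithLp.toLp 2 (fun i => if α < |w i| then w i else 0)

/-- ℓ⁰ "norm": number of nonzero entries. -/
noncomputable def norm0 {d : ℕ} (u : EuclideanSpace ℝ (Fin d)) : ℝ :=
  ((Finset.univ : Finset (Fin d)).filter fun i => u i ≠ 0).card

section Descent
variable {E : Type*} [NormedAddCommGroup E] [InnerProductSpace ℝ E] [CompleteSpace E]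

lemma descent_ineq (F : E → ℝ) (G : E → E) (M : ℝ) (hM : 0 ≤ M)
    (hG : ∀ z, HasGradientAt F (G z) z)
    (hLip : ∀ p q : E, ‖G q - G p‖ ≤ M * ‖q - p‖) (x y : E) :
    F y ≤ F x + inner ℝ (G x) (y - x) + M / 2 * ‖y - x‖ ^ 2 := by
  set v := y - x with hv
  have hGcont : Continuous G := by
    have : LipschitzWith ⟨M, hM⟩ G :=
      LipschitzWith.of_dist_le_mul (fun p q => by
        rw [dist_eq_norm, dist_eq_norm]; exact hLip q p)
    exact this.continuous
  set l : ℝ → E := fun t => x + t • v with hldef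
  have hl : ∀ t : ℝ, HasDerivAt l v t := fun t => by
    exact (((hasDerivAt_id t).smul_const v).const_add x).congr_deriv (one_smul ℝ v)
  have hφ : ∀ t : ℝ, HasDerivAt (fun s => F (l s)) ((inner ℝ (G (l t)) v : ℝ)) t := by
    intro t
    have h1 := (hG (l t)).hasFDerivAt.comp_hasDerivAt t (hl t)
    simp only [InnerProductSpace.toDual_apply_apply] at h1
    exact h1
  have hlcont : Continuous l := by continuity
  have hcont : Continuous fun t : ℝ => (inner ℝ (G (l t)) v : ℝ) :=
    (hGcont.comp hlcont).inner continuous_const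
  have hFTC : F y - F x = ∫ t in (0:ℝ)..1, (inner ℝ (G (l t)) v : ℝ) := by
    have h := intervalIntegral.integral_eq_sub_of_hasDerivAt
      (f := fun s => F (l s)) (f' := fun t => (inner ℝ (G (l t)) v : ℝ))
      (fun t _ => hφ t) (hcont.intervalIntegrable 0 1)
    rw [h]
    have h0 : l 0 = x := by simp [hldef]
    have h1 : l 1 = y := by simp [hldef, hv]
    rw [h0, h1]
  have hbound : (∫ t in (0:ℝ)..1, (inner ℝ (G (l t)) v : ℝ))
      ≤ ∫ t in (0:ℝ)..1, ((inner ℝ (G x) v : ℝ) + t * (M * ‖v‖ ^ 2)) := by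
    apply intervalIntegral.integral_mono_on (by norm_num) (hcont.intervalIntegrable 0 1)
      ((Continuous.intervalIntegrable (by fun_prop) 0 1))
    intro t ht
    rw [Set.mem_Icc] at ht
    have h1 : (inner ℝ (G (l t)) v : ℝ) - inner ℝ (G x) v = inner ℝ (G (l t) - G x) v :=
      (inner_sub_left _ _ _).symm
    have h2 : (inner ℝ (G (l t) - G x) v : ℝ) ≤ ‖G (l t) - G x‖ * ‖v‖ := real_inner_le_norm _ _
    have h3 : ‖G (l t) - G x‖ ≤ M * ‖l t - x‖ := hLip x (l t)
    have h4 : ‖l t - x‖ = t * ‖v‖ := by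
      have : l t - x = t • v := by simp [hldef]
      rw [this, norm_smul, Real.norm_eq_abs, abs_of_nonneg ht.1]
    have h5 : ‖G (l t) - G x‖ * ‖v‖ ≤ (M * (t * ‖v‖)) * ‖v‖ := by
      apply mul_le_mul_of_nonneg_right _ (norm_nonneg v)
      rw [← h4]; exact h3
    nlinarith [h1, h2]
  have hInt : (∫ t in (0:ℝ)..1, ((inner ℝ (G x) v : ℝ) + t * (M * ‖v‖ ^ 2)))
      = inner ℝ (G x) v + M / 2 * ‖v‖ ^ 2 := by
    rw [intervalIntegral.integral_add (intervalIntegrable_const)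
      (Continuous.intervalIntegrable (by fun_prop : Continuous fun t : ℝ => t * (M * ‖v‖ ^ 2)) 0 1)]
    rw [intervalIntegral.integral_mul_const, integral_id]
    simp
    ring
  linarith [hFTC, hbound, hInt]

lemma descent_step (F : E → ℝ) (G : E → E) (M η : ℝ) (hM : 0 ≤ M)
    (hG : ∀ z, HasGradientAt F (G z) z)
    (hLip : ∀ p q : E, ‖G q - G p‖ ≤ M * ‖q - p‖)
    (hη : 0 < η) (hηM : η * M ≤ 2) (x : E) :
    F (x - η • G x) ≤ F x := by
  have h := descent_ineq F G M hM hG hLip x (x - η • G x)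
  have h1 : x - η • G x - x = -(η • G x) := by abel
  rw [h1] at h
  have h2 : (inner ℝ (G x) (-(η • G x)) : ℝ) = -(η * ‖G x‖ ^ 2) := by
    rw [inner_neg_right, real_inner_smul_right, real_inner_self_eq_norm_sq]
  have h3 : ‖-(η • G x)‖ ^ 2 = η ^ 2 * ‖G x‖ ^ 2 := by
    rw [norm_neg, norm_smul, Real.norm_eq_abs, abs_of_pos hη, mul_pow]
  rw [h2, h3] at h
  nlinarith [sq_nonneg ‖G x‖, mul_nonneg (mul_nonneg hη.le (sub_nonneg.2 hηM))
    (sq_nonneg ‖G x‖)]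

end Descent

lemma norm0_nonneg {d : ℕ} (u : EuclideanSpace ℝ (Fin d)) : 0 ≤ norm0 u := by
  unfold norm0; positivity

lemma cost_eq_sum {d : ℕ} (lam β : ℝ) (x v : EuclideanSpace ℝ (Fin d)) :
    lam * norm0 v + β / 2 * ‖x - v‖ ^ 2
      = ∑ i : Fin d, (lam * (if v i ≠ 0 then (1:ℝ) else 0) + β / 2 * (x i - v i) ^ 2) := by
  have h1 : norm0 v = ∑ i : Fin d, (if v i ≠ 0 then (1:ℝ) else 0) := by
    unfold norm0
    rw [Finset.card_filter]
    push_cast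
    rfl
  have h2 : ‖x - v‖ ^ 2 = ∑ i : Fin d, (x i - v i) ^ 2 := by
    rw [EuclideanSpace.norm_eq, Real.sq_sqrt (by positivity)]
    congr 1; ext i
    simp [sq_abs]
  rw [h1, h2, Finset.sum_add_distrib, Finset.mul_sum, Finset.mul_sum]

lemma hthr_optimal {d : ℕ} (lam β : ℝ) (hβ : 0 < β) (hlam : 0 < lam)
    (x v : EuclideanSpace ℝ (Fin d)) :
    lam * norm0 (Hthr (Real.sqrt (2 * lam / β)) x)
        + β / 2 * ‖x - Hthr (Real.sqrt (2 * lam / β)) x‖ ^ 2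
      ≤ lam * norm0 v + β / 2 * ‖x - v‖ ^ 2 := by
  set α := Real.sqrt (2 * lam / β) with hα
  have hα0 : 0 ≤ α := Real.sqrt_nonneg _
  have hα2 : α ^ 2 = 2 * lam / β := Real.sq_sqrt (by positivity)
  rw [cost_eq_sum, cost_eq_sum]
  apply Finset.sum_le_sum
  intro i _
  have hH : Hthr α x i = if α < |x i| then x i else 0 := rfl
  by_cases h : α < |x i|
  · have hne : x i ≠ 0 := by
      intro h0; rw [h0] at h; simp at h; linarith
    rw [hH, if_pos h, if_pos (by simpa using hne)]
    have hsq : α ^ 2 < x i ^ 2 := by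
      rw [← sq_abs (x i)]
      exact pow_lt_pow_left₀ h hα0 two_ne_zero |>.trans_le le_rfl
    by_cases hv : v i = 0
    · rw [if_neg (by simpa using hv), hv]
      rw [hα2] at hsq
      have : 2 * lam / β < x i ^ 2 := hsq
      have h2 : lam < β / 2 * x i ^ 2 := by
        rw [div_lt_iff₀ hβ] at this
        nlinarith
      nlinarith
    · rw [if_pos hv]
      nlinarith [sq_nonneg (x i - v i)]
  · rw [hH, if_neg h]
    have h00 : (if (0:ℝ) ≠ 0 then (1:ℝ) else 0) = 0 := if_neg (by simp)
    rw [h00]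
    have hle : |x i| ≤ α := not_lt.1 h
    have hsq : x i ^ 2 ≤ α ^ 2 := by
      rw [← sq_abs (x i)]
      exact pow_le_pow_left₀ (abs_nonneg _) hle 2
    rw [hα2] at hsq
    have hkey : β / 2 * x i ^ 2 ≤ lam := by
      rw [le_div_iff₀ hβ] at hsq
      nlinarith
    by_cases hv : v i = 0
    · rw [if_neg (by simpa using hv), hv]
    · rw [if_pos hv]
      nlinarith [sq_nonneg (x i - v i)]

lemma grad_g {d : ℕ} (f : EuclideanSpace ℝ (Fin d) → ℝ) (hdiff : Differentiable ℝ f)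
    (β : ℝ) (c z : EuclideanSpace ℝ (Fin d)) :
    HasGradientAt (fun w => f w + β / 2 * ‖w - c‖ ^ 2)
      (gradient f z + β • (z - c)) z := by
  rw [hasGradientAt_iff_hasFDerivAt]
  have h1 : HasFDerivAt f
      (InnerProductSpace.toDual ℝ _ (gradient f z)) z :=
    ((hdiff z).hasGradientAt).hasFDerivAt
  have hsub : HasFDerivAt (fun w : EuclideanSpace ℝ (Fin d) => w - c)
      (ContinuousLinearMap.id ℝ _) z := (hasFDerivAt_id z).sub_const c
  have h2 := (hsub.inner ℝ hsub).const_mul (β / 2)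
  have h3 : (fun w : EuclideanSpace ℝ (Fin d) => β / 2 * ‖w - c‖ ^ 2)
      = fun w => β / 2 * (inner ℝ (w - c) (w - c) : ℝ) := by
    funext w
    rw [real_inner_self_eq_norm_sq]
  have h4 := h1.add (h3 ▸ h2)
  apply h4.congr_fderiv
  ext y
  simp [InnerProductSpace.toDual_apply_apply, fderivInnerCLM_apply, inner_add_left,
    real_inner_smul_left, real_inner_comm, mul_sub, sub_mul,
    Finset.sum_sub_distrib, mul_comm]
  rw [inner_sub_right, real_inner_comm z y, real_inner_comm c y]
  ring

theorem rvsm_lagrangian_monotone_converges {d : ℕ}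
    (f : EuclideanSpace ℝ (Fin d) → ℝ) (L β lam η : ℝ)
    (hβ : 0 < β) (hlam : 0 < lam) (hL : 0 ≤ L) (hη : 0 < η) (hη2 : η < 2 / (β + L))
    (hdiff : Differentiable ℝ f)
    (hLip : ∀ x y : EuclideanSpace ℝ (Fin d),
      ‖gradient f y - gradient f x‖ ≤ L * ‖y - x‖)
    (hf0 : ∀ x, 0 ≤ f x)
    (w u : ℕ → EuclideanSpace ℝ (Fin d))
    (hu0 : u 0 = Hthr (Real.sqrt (2 * lam / β)) (w 0))
    (hw : ∀ t, w (t + 1) = w t - η • gradient f (w t) - (η * β) • (w t - u t))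
    (hu : ∀ t, u (t + 1) = Hthr (Real.sqrt (2 * lam / β)) (w (t + 1))) :
    (∀ t, f (w (t + 1)) + lam * norm0 (u (t + 1)) + β / 2 * ‖w (t + 1) - u (t + 1)‖ ^ 2
        ≤ f (w t) + lam * norm0 (u t) + β / 2 * ‖w t - u t‖ ^ 2) ∧
    ∃ l : ℝ, Filter.Tendsto
      (fun t => f (w t) + lam * norm0 (u t) + β / 2 * ‖w t - u t‖ ^ 2)
      Filter.atTop (nhds l) := by
  have hβL : 0 < β + L := by linarith
  have hηM : η * (L + β) ≤ 2 := by
    have h := (lt_div_iff₀ hβL).1 hη2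
    nlinarith
  have step : ∀ t, f (w (t + 1)) + lam * norm0 (u (t + 1))
        + β / 2 * ‖w (t + 1) - u (t + 1)‖ ^ 2
      ≤ f (w t) + lam * norm0 (u t) + β / 2 * ‖w t - u t‖ ^ 2 := by
    intro t
    set g : EuclideanSpace ℝ (Fin d) → ℝ := fun z => f z + β / 2 * ‖z - u t‖ ^ 2 with hg
    set G : EuclideanSpace ℝ (Fin d) → EuclideanSpace ℝ (Fin d) :=
      fun z => gradient f z + β • (z - u t) with hG
    have hGgrad : ∀ z, HasGradientAt g (G z) z := fun z => grad_g f hdiff β (u t) z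
    have hGLip : ∀ p q, ‖G q - G p‖ ≤ (L + β) * ‖q - p‖ := by
      intro p q
      have h1 : G q - G p = (gradient f q - gradient f p) + β • (q - p) := by
        simp only [hG]; module
      rw [h1]
      calc ‖(gradient f q - gradient f p) + β • (q - p)‖
          ≤ ‖gradient f q - gradient f p‖ + ‖β • (q - p)‖ := norm_add_le _ _
        _ ≤ L * ‖q - p‖ + β * ‖q - p‖ := by
            rw [norm_smul, Real.norm_eq_abs, abs_of_pos hβ]
            exact add_le_add (hLip p q) le_rfl
        _ = (L + β) * ‖q - p‖ := by ring
    have hwstep : w (t + 1) = w t - η • G (w t) := by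
      rw [hw t]; simp only [hG]; module
    have hdesc : g (w (t + 1)) ≤ g (w t) := by
      rw [hwstep]
      exact descent_step g G (L + β) η (by linarith) hGgrad hGLip hη hηM (w t)
    have hthresh := hthr_optimal lam β hβ hlam (w (t + 1)) (u t)
    rw [← hu t] at hthresh
    simp only [hg] at hdesc
    linarith [hthresh, hdesc]
  refine ⟨step, ?_⟩
  refine ⟨_, tendsto_atTop_ciInf (antitone_nat_of_succ_le step) ⟨0, ?_⟩⟩
  rintro x ⟨t, rfl⟩
  exact add_nonneg (add_nonneg (hf0 _) (mul_nonneg hlam.le (norm0_nonneg _)))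
    (by positivity)
end

section
/- Let λ, β > 0 and α = √(2λ/β). The map w ↦ λ‖H_α(w)‖₀ + (β/2)‖w - H_α(w)‖₂², i.e. the value of the inner minimization in the RVSM Lagrangian, equals Σ_{i=1}^d min(λ, (β/2)w_i²), which is a continuous function of w. -/
open scoped Classical

theorem rvsm_value_envelope {d : ℕ} (lam β : ℝ) (hlam : 0 < lam) (hβ : 0 < β) :
    (∀ w : EuclideanSpace ℝ (Fin d),
      lam * norm0 (Hthr (Real.sqrt (2 * lam / β)) w)
          + β / 2 * ‖w - Hthr (Real.sqrt (2 * lam / β)) w‖ ^ 2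
        = ∑ i : Fin d, min lam (β / 2 * (w i) ^ 2)) ∧
    Continuous (fun w : EuclideanSpace ℝ (Fin d) =>
      lam * norm0 (Hthr (Real.sqrt (2 * lam / β)) w)
        + β / 2 * ‖w - Hthr (Real.sqrt (2 * lam / β)) w‖ ^ 2) := by
  set α : ℝ := Real.sqrt (2 * lam / β) with hα
  have hαnn : 0 ≤ α := Real.sqrt_nonneg _
  have hα2 : α ^ 2 = 2 * lam / β := Real.sq_sqrt (by positivity)
  have hkey : β / 2 * α ^ 2 = lam := by
    rw [hα2]; field_simp
  have heq : ∀ w : EuclideanSpace ℝ (Fin d),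
      lam * norm0 (Hthr α w) + β / 2 * ‖w - Hthr α w‖ ^ 2
        = ∑ i : Fin d, min lam (β / 2 * (w i) ^ 2) := by
    intro w
    have hnorm : ‖w - Hthr α w‖ ^ 2 = ∑ i : Fin d, (w i - Hthr α w i) ^ 2 := by
      rw [EuclideanSpace.norm_eq, Real.sq_sqrt (by positivity)]
      simp [sq_abs]
    have hcard : lam * norm0 (Hthr α w)
        = ∑ i : Fin d, if Hthr α w i ≠ 0 then lam else 0 := by
      rw [norm0, Finset.sum_ite, Finset.sum_const_zero, Finset.sum_const,
        nsmul_eq_mul, add_zero, mul_comm]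
    rw [hnorm, hcard, Finset.mul_sum, ← Finset.sum_add_distrib]
    refine Finset.sum_congr rfl fun i _ => ?_
    by_cases h : α < |w i|
    · have hu : Hthr α w i = w i := (if_pos h : (if α < |w i| then w i else 0) = w i)
      have hne : w i ≠ 0 := by
        intro h0; rw [h0] at h; simp at h; exact absurd h (not_lt.2 hαnn)
      have hge : lam ≤ β / 2 * (w i) ^ 2 := by
        rw [← hkey]
        have : α ^ 2 ≤ (w i) ^ 2 := by
          rw [← sq_abs (w i)]; exact pow_le_pow_left₀ hαnn h.le 2
        nlinarith
      rw [hu, if_pos hne, min_eq_left hge]; ring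
    · have hu : Hthr α w i = 0 := (if_neg h : (if α < |w i| then w i else 0) = 0)
      have hle : β / 2 * (w i) ^ 2 ≤ lam := by
        rw [← hkey]
        have : (w i) ^ 2 ≤ α ^ 2 := by
          rw [← sq_abs (w i)]; exact pow_le_pow_left₀ (abs_nonneg _) (not_lt.1 h) 2
        nlinarith
      rw [hu, if_neg (by simp), min_eq_right hle]; ring
  refine ⟨heq, ?_⟩
  have : (fun w : EuclideanSpace ℝ (Fin d) =>
      lam * norm0 (Hthr α w) + β / 2 * ‖w - Hthr α w‖ ^ 2)
      = fun w => ∑ i : Fin d, min lam (β / 2 * (w i) ^ 2) := funext heq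
  rw [this]
  exact continuous_finset_sum _ fun i _ =>
    continuous_const.min (continuous_const.mul ((EuclideanSpace.proj i).continuous.pow 2))
end
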